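/- Let H : R^d → R be L-smooth and bounded below by H*. Consider θ_{t+1} = θ_t - η Ĝ_t with η ≤ 1/(2L), where E[Ĝ_t | θ_t] = ∇H(θ_t) + b_t with ||b_t|| ≤ β and E[||Ĝ_t - E[Ĝ_t|θ_t]||^2 | θ_t] ≤ v. Then (1/T) ∑_{t=0}^{T-1} E[||∇H(θ_t)||^2] ≤ (4/(ηT))(H(θ_0) - H*) + 2β^2 + 2Lηv. -/

import Mathlib

open MeasureTheory Finset

section helpers

variable {Ω : Type*} {m m0 : MeasurableSpace Ω} {μ : Measure Ω}

lemma integrable_inner_of_memL2 {F : Type*} [NormedAddCommGroup F] [InnerProductSpace ℝ F]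
    {f g : Ω → F} (hf : MemLp f 2 μ) (hg : MemLp g 2 μ) :
    Integrable (fun ω => (inner ℝ (f ω) (g ω) : ℝ)) μ := by
  have h := L2.integrable_inner (𝕜 := ℝ) (hf.toLp f) (hg.toLp g)
  apply h.congr
  filter_upwards [hf.coeFn_toLp, hg.coeFn_toLp] with ω h1 h2
  simp [h1, h2]

lemma integrable_mul_of_memL2 {f g : Ω → ℝ} (hf : MemLp f 2 μ) (hg : MemLp g 2 μ) :
    Integrable (fun ω => f ω * g ω) μ := by
  have h := integrable_inner_of_memL2 hf hg
  apply h.congr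
  filter_upwards with ω
  simp [RCLike.inner_apply, mul_comm]

lemma condexp_const_inner {F : Type*} [NormedAddCommGroup F] [InnerProductSpace ℝ F]
    [CompleteSpace F] (hm : m ≤ m0) [IsFiniteMeasure μ]
    {G : Ω → F} (hG : Integrable G μ) (c : F) :
    (fun ω => (inner ℝ c ((μ[G|m]) ω) : ℝ)) =ᵐ[μ] μ[fun ω => (inner ℝ c (G ω) : ℝ)|m] := by
  haveI : IsFiniteMeasure (μ.trim hm) := isFiniteMeasure_trim hm
  refine ae_eq_condExp_of_forall_setIntegral_eq hm (hG.const_inner c) ?_ ?_ ?_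
  · intro s _ _
    exact (integrable_condExp.const_inner c).integrableOn
  · intro s hs hμs
    rw [integral_inner (integrable_condExp.integrableOn (s := s) (μ := μ) (f := μ[G|m])) c,
      setIntegral_condExp hm hG hs, ← integral_inner (hG.integrableOn (s := s)) c]
  · exact stronglyMeasurable_condExp.aestronglyMeasurable.const_inner (c := c)

lemma euclid_inner_expand {dim : ℕ} (x y : EuclideanSpace ℝ (Fin dim)) :
    (inner ℝ x y : ℝ) = ∑ i : Fin dim,
      (inner ℝ (EuclideanSpace.single i (1:ℝ)) x : ℝ) *
        (inner ℝ (EuclideanSpace.single i (1:ℝ)) y : ℝ) := by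
  simp [EuclideanSpace.inner_single_left, PiLp.inner_apply, RCLike.inner_apply, mul_comm]

lemma integral_inner_condexp {dim : ℕ} (hm : m ≤ m0) [IsProbabilityMeasure μ]
    {f G : Ω → EuclideanSpace ℝ (Fin dim)}
    (hfm : AEStronglyMeasurable[m] f μ) (hf2 : MemLp f 2 μ) (hG2 : MemLp G 2 μ)
    (hE2 : MemLp (μ[G|m]) 2 μ) :
    ∫ ω, (inner ℝ (f ω) (G ω) : ℝ) ∂μ = ∫ ω, (inner ℝ (f ω) ((μ[G|m]) ω) : ℝ) ∂μ := by
  haveI : IsFiniteMeasure (μ.trim hm) := isFiniteMeasure_trim hm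
  have key : ∀ i : Fin dim,
      ∫ ω, (inner ℝ (EuclideanSpace.single i (1:ℝ)) (f ω) : ℝ) *
          (inner ℝ (EuclideanSpace.single i (1:ℝ)) (G ω) : ℝ) ∂μ
      = ∫ ω, (inner ℝ (EuclideanSpace.single i (1:ℝ)) (f ω) : ℝ) *
          (inner ℝ (EuclideanSpace.single i (1:ℝ)) ((μ[G|m]) ω) : ℝ) ∂μ := by
    intro i
    set c : EuclideanSpace ℝ (Fin dim) := EuclideanSpace.single i (1:ℝ) with hc
    set fi : Ω → ℝ := fun ω => (inner ℝ c (f ω) : ℝ) with hfi_def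
    set Gi : Ω → ℝ := fun ω => (inner ℝ c (G ω) : ℝ) with hGi_def
    have hfi : AEStronglyMeasurable[m] fi μ := hfm.const_inner (c := c)
    have hmul : μ[fi * Gi|m] =ᵐ[μ] fi * μ[Gi|m] :=
      condExp_mul_of_aestronglyMeasurable_left hfi
        (integrable_mul_of_memL2 (hf2.const_inner c) (hG2.const_inner c))
        ((hG2.const_inner c).integrable (by norm_num))
    calc ∫ ω, fi ω * Gi ω ∂μ
        = ∫ ω, (μ[fi * Gi|m]) ω ∂μ := by
          rw [integral_condExp hm]; rfl
      _ = ∫ ω, fi ω * (μ[Gi|m]) ω ∂μ := by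
          refine integral_congr_ae (hmul.mono fun ω h => ?_)
          simpa using h
      _ = ∫ ω, fi ω * (inner ℝ c ((μ[G|m]) ω) : ℝ) ∂μ := by
          refine integral_congr_ae ?_
          filter_upwards [condexp_const_inner hm (hG2.integrable (by norm_num)) c] with ω h
          rw [hGi_def, ← h]
  have e1 : (fun ω => (inner ℝ (f ω) (G ω) : ℝ)) = fun ω => ∑ i : Fin dim,
      (inner ℝ (EuclideanSpace.single i (1:ℝ)) (f ω) : ℝ) *
        (inner ℝ (EuclideanSpace.single i (1:ℝ)) (G ω) : ℝ) :=
    funext fun ω => euclid_inner_expand _ _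
  have e2 : (fun ω => (inner ℝ (f ω) ((μ[G|m]) ω) : ℝ)) = fun ω => ∑ i : Fin dim,
      (inner ℝ (EuclideanSpace.single i (1:ℝ)) (f ω) : ℝ) *
        (inner ℝ (EuclideanSpace.single i (1:ℝ)) ((μ[G|m]) ω) : ℝ) :=
    funext fun ω => euclid_inner_expand _ _
  rw [e1, e2, integral_finset_sum _ fun i _ =>
      integrable_mul_of_memL2 (hf2.const_inner _) (hG2.const_inner _),
    integral_finset_sum _ fun i _ =>
      integrable_mul_of_memL2 (hf2.const_inner _) (hE2.const_inner _)]
  exact Finset.sum_congr rfl fun i _ => key i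

lemma sgd_descent {dim : ℕ} (H : EuclideanSpace ℝ (Fin dim) → ℝ) (L : ℝ)
    (hdiff : Differentiable ℝ H)
    (hlip : ∀ x y, ‖gradient H x - gradient H y‖ ≤ L * ‖x - y‖)
    (x y : EuclideanSpace ℝ (Fin dim)) :
    H y ≤ H x + inner ℝ (gradient H x) (y - x) + L / 2 * ‖y - x‖ ^ 2 := by
  set v : EuclideanSpace ℝ (Fin dim) := y - x with hv
  have hline : ∀ s : ℝ, HasDerivAt (fun s : ℝ => H (x + s • v))
      (inner ℝ (gradient H (x + s • v)) v : ℝ) s := by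
    intro s
    have h1 : HasDerivAt (fun s : ℝ => x + s • v) v s := by
      simpa using ((hasDerivAt_id s).smul_const v).const_add x
    have h2 : HasFDerivAt H (InnerProductSpace.toDual ℝ _ (gradient H (x + s • v)))
        (x + s • v) :=
      hasGradientAt_iff_hasFDerivAt.mp (hdiff _).hasGradientAt
    simpa [InnerProductSpace.toDual_apply_apply, Function.comp_def] using h2.comp_hasDerivAt s h1
  set φ : ℝ → ℝ := fun s => H (x + s • v) - inner ℝ (gradient H x) v * s
      - L * ‖v‖ ^ 2 / 2 * s ^ 2 with hφ
  have hd : ∀ s : ℝ, HasDerivAt φ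
      ((inner ℝ (gradient H (x + s • v)) v : ℝ) - inner ℝ (gradient H x) v
        - L * ‖v‖ ^ 2 * s) s := by
    intro s
    have h := ((hline s).sub ((hasDerivAt_id s).const_mul
        (inner ℝ (gradient H x) v : ℝ))).sub (((hasDerivAt_pow 2 s)).const_mul (L * ‖v‖ ^ 2 / 2))
    convert h using 1
    · rfl
    · rfl
    · rfl
    push_cast
    ring
  have hanti : AntitoneOn φ (Set.Icc 0 1) := by
    apply antitoneOn_of_deriv_nonpos (convex_Icc 0 1)
    · exact fun s _ => (hd s).continuousAt.continuousWithinAt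
    · exact fun s _ => (hd s).differentiableAt.differentiableWithinAt
    · intro s hs
      rw [interior_Icc] at hs
      rw [(hd s).deriv]
      have h1 : (inner ℝ (gradient H (x + s • v)) v : ℝ) - inner ℝ (gradient H x) v
          = inner ℝ (gradient H (x + s • v) - gradient H x) v := by
        rw [inner_sub_left]
      rw [h1]
      have h2 : (inner ℝ (gradient H (x + s • v) - gradient H x) v : ℝ) ≤ L * s * ‖v‖ ^ 2 := by
        calc (inner ℝ (gradient H (x + s • v) - gradient H x) v : ℝ)
            ≤ ‖gradient H (x + s • v) - gradient H x‖ * ‖v‖ := real_inner_le_norm _ _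
          _ ≤ (L * ‖(x + s • v) - x‖) * ‖v‖ := by
              apply mul_le_mul_of_nonneg_right (hlip _ _) (norm_nonneg _)
          _ = L * s * ‖v‖ ^ 2 := by
              simp only [add_sub_cancel_left, norm_smul, Real.norm_eq_abs,
                abs_of_pos hs.1]
              ring
      nlinarith [hs.1.le]
  have key := hanti (Set.left_mem_Icc.mpr zero_le_one) (Set.right_mem_Icc.mpr zero_le_one)
    zero_le_one
  have h0 : φ 0 = H x := by simp [hφ]
  have h1 : φ 1 = H y - inner ℝ (gradient H x) v - L * ‖v‖ ^ 2 / 2 := by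
    simp [hφ, hv, add_sub_cancel]
  rw [h0, h1] at key
  have : ‖v‖ ^ 2 = ‖y - x‖ ^ 2 := by rw [hv]
  linarith [key]

end helpers

set_option maxHeartbeats 1000000 in
/-- Biased, noisy SGD on a nonconvex L-smooth function bounded below:
average expected squared gradient norm bound with bias β and variance v. -/
theorem biased_sgd_nonconvex_rate {dim : ℕ} (H : EuclideanSpace ℝ (Fin dim) → ℝ)
    (L : ℝ) (hL : 0 < L)
    (hdiff : Differentiable ℝ H)
    (hlip : ∀ x y, ‖gradient H x - gradient H y‖ ≤ L * ‖x - y‖)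
    (Hstar : ℝ) (hlow : ∀ x, Hstar ≤ H x)
    {Ω : Type*} [MeasurableSpace Ω] (μ : Measure Ω) [IsProbabilityMeasure μ]
    (θ Ghat : ℕ → Ω → EuclideanSpace ℝ (Fin dim))
    (b : ℕ → Ω → EuclideanSpace ℝ (Fin dim))
    (hθmeas : ∀ t, Measurable (θ t)) (hGmeas : ∀ t, Measurable (Ghat t))
    (hG2 : ∀ t, MemLp (Ghat t) 2 μ)
    (η : ℝ) (hη0 : 0 < η) (hη : η ≤ 1 / (2 * L))
    (hupd : ∀ t, ∀ ω, θ (t + 1) ω = θ t ω - η • Ghat t ω)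
    (hmean : ∀ t,
      μ[Ghat t | MeasurableSpace.comap (θ t) inferInstance]
        =ᵐ[μ] fun ω => gradient H (θ t ω) + b t ω)
    (β : ℝ) (hbias : ∀ t ω, ‖b t ω‖ ≤ β)
    (v : ℝ)
    (hvar : ∀ t, ∀ᵐ ω ∂μ,
      (μ[(fun ω' => ‖Ghat t ω' -
          (μ[Ghat t | MeasurableSpace.comap (θ t) inferInstance]) ω'‖ ^ 2) |
        MeasurableSpace.comap (θ t) inferInstance]) ω ≤ v)
    (θ0 : EuclideanSpace ℝ (Fin dim)) (hθ0 : ∀ ω, θ 0 ω = θ0)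
    (hgint : ∀ t, Integrable (fun ω => ‖gradient H (θ t ω)‖ ^ 2) μ)
    (T : ℕ) (hT : 0 < T) :
    (1 / T : ℝ) * ∑ t ∈ range T, ∫ ω, ‖gradient H (θ t ω)‖ ^ 2 ∂μ ≤
      (4 / (η * T)) * (H θ0 - Hstar) + 2 * β ^ 2 + 2 * L * η * v := by
  have hm : ∀ t, MeasurableSpace.comap (θ t) inferInstance ≤ ‹MeasurableSpace Ω› :=
    fun t => measurable_iff_comap_le.mp (hθmeas t)
  set Et : ℕ → Ω → EuclideanSpace ℝ (Fin dim) :=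
    fun t => μ[Ghat t | MeasurableSpace.comap (θ t) inferInstance] with hEt_def
  have hgradmeas : Measurable (gradient H) := by
    have : Measurable fun x => (InnerProductSpace.toDual ℝ
        (EuclideanSpace ℝ (Fin dim))).symm (fderiv ℝ H x) :=
      (LinearIsometryEquiv.continuous _).measurable.comp (measurable_fderiv ℝ H)
    exact this
  have hgmeas : ∀ t, Measurable fun ω => gradient H (θ t ω) :=
    fun t => hgradmeas.comp (hθmeas t)
  have hg2 : ∀ t, MemLp (fun ω => gradient H (θ t ω)) 2 μ := fun t =>
    (memLp_two_iff_integrable_sq_norm (hgmeas t).aestronglyMeasurable).mpr (hgint t)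
  have hgm' : ∀ t, AEStronglyMeasurable[MeasurableSpace.comap (θ t) inferInstance]
      (fun ω => gradient H (θ t ω)) μ := fun t =>
    StronglyMeasurable.aestronglyMeasurable
      ((hgradmeas.comp (measurable_iff_comap_le.mpr le_rfl)).stronglyMeasurable)
  have hb_aesm : ∀ t, AEStronglyMeasurable (b t) μ := by
    intro t
    have h1 : AEStronglyMeasurable (fun ω => Et t ω - gradient H (θ t ω)) μ :=
      ((stronglyMeasurable_condExp.mono (hm t)).aestronglyMeasurable).sub
        (hgmeas t).aestronglyMeasurable
    exact h1.congr ((hmean t).mono fun ω h => by rw [hEt_def]; simp only at h ⊢; rw [h]; abel)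
  have hb2 : ∀ t, MemLp (b t) 2 μ := fun t =>
    MemLp.of_bound (hb_aesm t) β (Filter.Eventually.of_forall (hbias t))
  have hE2 : ∀ t, MemLp (Et t) 2 μ := by
    intro t
    refine (memLp_congr_ae (hmean t)).mpr ?_
    exact (hg2 t).add (hb2 t)
  have hvt : ∀ t, ∫ ω, ‖Ghat t ω - Et t ω‖ ^ 2 ∂μ ≤ v := by
    intro t
    calc ∫ ω, ‖Ghat t ω - Et t ω‖ ^ 2 ∂μ
        = ∫ ω, (μ[(fun ω' => ‖Ghat t ω' - Et t ω'‖ ^ 2) |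
            MeasurableSpace.comap (θ t) inferInstance]) ω ∂μ :=
          (integral_condExp (hm t)).symm
      _ ≤ ∫ _ω, v ∂μ := integral_mono_ae integrable_condExp (integrable_const v) (hvar t)
      _ = v := by simp
  have hv0 : 0 ≤ v :=
    le_trans (integral_nonneg fun ω => by positivity) (hvt 0)
  have hLη : η * (2 * L) ≤ 1 := by
    rw [le_div_iff₀ (by positivity : (0:ℝ) < 2 * L)] at hη
    exact hη
  have step : ∀ t, Integrable (fun ω => H (θ t ω)) μ →
      Integrable (fun ω => H (θ (t+1) ω)) μ ∧
      ∫ ω, H (θ (t+1) ω) ∂μ ≤ ∫ ω, H (θ t ω) ∂μ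
        - η/2 * ∫ ω, ‖gradient H (θ t ω)‖^2 ∂μ + η/2 * β^2 + L*η^2/2 * v := by
    intro t hHint
    have hpt : ∀ ω, H (θ (t+1) ω) ≤ H (θ t ω)
        - η * inner ℝ (gradient H (θ t ω)) (Ghat t ω) + L * η^2 / 2 * ‖Ghat t ω‖^2 := by
      intro ω
      have hdes := sgd_descent H L hdiff hlip (θ t ω) (θ (t+1) ω)
      have hdiffeq : θ (t+1) ω - θ t ω = -(η • Ghat t ω) := by
        rw [hupd t ω]; abel
      rw [hdiffeq] at hdes
      have h2 : (inner ℝ (gradient H (θ t ω)) (-(η • Ghat t ω)) : ℝ)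
          = -(η * inner ℝ (gradient H (θ t ω)) (Ghat t ω)) := by
        rw [inner_neg_right, real_inner_smul_right]
      have h3 : ‖-(η • Ghat t ω)‖^2 = η^2 * ‖Ghat t ω‖^2 := by
        rw [norm_neg, norm_smul, Real.norm_eq_abs, mul_pow, sq_abs]
      rw [h2, h3] at hdes
      nlinarith [hdes]
    have hinnerint : Integrable (fun ω => (inner ℝ (gradient H (θ t ω)) (Ghat t ω) : ℝ)) μ :=
      integrable_inner_of_memL2 (hg2 t) (hG2 t)
    have hGsqint : Integrable (fun ω => ‖Ghat t ω‖^2) μ :=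
      (memLp_two_iff_integrable_sq_norm (hG2 t).aestronglyMeasurable).mp (hG2 t)
    have hUint : Integrable (fun ω => H (θ t ω)
        - η * inner ℝ (gradient H (θ t ω)) (Ghat t ω) + L * η^2/2 * ‖Ghat t ω‖^2) μ :=
      (hHint.sub (hinnerint.const_mul η)).add (hGsqint.const_mul _)
    have hH1meas : AEStronglyMeasurable (fun ω => H (θ (t+1) ω)) μ :=
      hdiff.continuous.comp_aestronglyMeasurable (hθmeas (t+1)).aestronglyMeasurable
    have hbnd : Integrable (fun ω => |H (θ t ω)
        - η * inner ℝ (gradient H (θ t ω)) (Ghat t ω) + L * η^2/2 * ‖Ghat t ω‖^2| + |Hstar|) μ :=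
      hUint.abs.add (integrable_const |Hstar|)
    have hH1int : Integrable (fun ω => H (θ (t+1) ω)) μ := by
      refine Integrable.mono' hbnd hH1meas ?_
      filter_upwards with ω
      rw [Real.norm_eq_abs, abs_le]
      constructor
      · have h4 := hlow (θ (t+1) ω)
        have h5 : -|Hstar| ≤ Hstar := neg_abs_le Hstar
        have h6 : (0:ℝ) ≤ |H (θ t ω) - η * inner ℝ (gradient H (θ t ω)) (Ghat t ω)
            + L * η^2/2 * ‖Ghat t ω‖^2| := abs_nonneg _
        linarith
      · have h4 := hpt ω
        have h5 := le_abs_self (H (θ t ω) - η * inner ℝ (gradient H (θ t ω)) (Ghat t ω)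
            + L * η^2/2 * ‖Ghat t ω‖^2)
        have h6 : (0:ℝ) ≤ |Hstar| := abs_nonneg _
        linarith
    refine ⟨hH1int, ?_⟩
    have h1 : ∫ ω, H (θ (t+1) ω) ∂μ ≤ ∫ ω, (H (θ t ω)
        - η * inner ℝ (gradient H (θ t ω)) (Ghat t ω) + L * η^2/2 * ‖Ghat t ω‖^2) ∂μ :=
      integral_mono_ae hH1int hUint (Filter.Eventually.of_forall hpt)
    have hsplit : ∫ ω, (H (θ t ω) - η * inner ℝ (gradient H (θ t ω)) (Ghat t ω)
          + L * η^2/2 * ‖Ghat t ω‖^2) ∂μ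
        = ∫ ω, H (θ t ω) ∂μ - η * ∫ ω, (inner ℝ (gradient H (θ t ω)) (Ghat t ω) : ℝ) ∂μ
          + L*η^2/2 * ∫ ω, ‖Ghat t ω‖^2 ∂μ := by
      have hi1 : Integrable (fun ω => H (θ t ω)
          - η * inner ℝ (gradient H (θ t ω)) (Ghat t ω)) μ := hHint.sub (hinnerint.const_mul η)
      have hi2 : Integrable (fun ω => L * η^2/2 * ‖Ghat t ω‖^2) μ := hGsqint.const_mul _
      rw [integral_add hi1 hi2, integral_sub hHint (hinnerint.const_mul η),
        integral_const_mul, integral_const_mul]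
    have hinner_eq : ∫ ω, (inner ℝ (gradient H (θ t ω)) (Ghat t ω) : ℝ) ∂μ
        = ∫ ω, (inner ℝ (gradient H (θ t ω)) (Et t ω) : ℝ) ∂μ :=
      integral_inner_condexp (hm t) (hgm' t) (hg2 t) (hG2 t) (hE2 t)
    have hcross : ∫ ω, (inner ℝ (Et t ω) (Ghat t ω) : ℝ) ∂μ
        = ∫ ω, (inner ℝ (Et t ω) (Et t ω) : ℝ) ∂μ :=
      integral_inner_condexp (hm t) stronglyMeasurable_condExp.aestronglyMeasurable
        (hE2 t) (hG2 t) (hE2 t)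
    have hEsqint : Integrable (fun ω => ‖Et t ω‖^2) μ :=
      (memLp_two_iff_integrable_sq_norm (hE2 t).aestronglyMeasurable).mp (hE2 t)
    have hGsq : ∫ ω, ‖Ghat t ω‖^2 ∂μ ≤ ∫ ω, ‖Et t ω‖^2 ∂μ + v := by
      have hGEint : Integrable (fun ω => ‖Ghat t ω - Et t ω‖^2) μ :=
        (memLp_two_iff_integrable_sq_norm (((hG2 t).sub (hE2 t)).aestronglyMeasurable)).mp
          ((hG2 t).sub (hE2 t))
      have hEGint : Integrable (fun ω => (inner ℝ (Et t ω) (Ghat t ω - Et t ω) : ℝ)) μ :=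
        integrable_inner_of_memL2 (hE2 t) ((hG2 t).sub (hE2 t))
      have hexp : (fun ω => ‖Ghat t ω‖^2) = fun ω => ‖Ghat t ω - Et t ω‖^2
          + 2 * inner ℝ (Et t ω) (Ghat t ω - Et t ω) + ‖Et t ω‖^2 := by
        funext ω
        have h7 : Ghat t ω = (Ghat t ω - Et t ω) + Et t ω := by abel
        calc ‖Ghat t ω‖^2 = ‖(Ghat t ω - Et t ω) + Et t ω‖^2 := by rw [← h7]
          _ = ‖Ghat t ω - Et t ω‖^2 + 2 * inner ℝ (Ghat t ω - Et t ω) (Et t ω) + ‖Et t ω‖^2 :=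
            norm_add_sq_real _ _
          _ = _ := by rw [real_inner_comm]
      have hz : ∫ ω, (inner ℝ (Et t ω) (Ghat t ω - Et t ω) : ℝ) ∂μ = 0 := by
        have h8 : (fun ω => (inner ℝ (Et t ω) (Ghat t ω - Et t ω) : ℝ))
            = fun ω => (inner ℝ (Et t ω) (Ghat t ω) : ℝ) - inner ℝ (Et t ω) (Et t ω) := by
          funext ω; rw [inner_sub_right]
        rw [h8, integral_sub (integrable_inner_of_memL2 (hE2 t) (hG2 t))
          (integrable_inner_of_memL2 (hE2 t) (hE2 t)), hcross, sub_self]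
      have hsum2 : ∫ ω, ‖Ghat t ω‖^2 ∂μ = ∫ ω, ‖Ghat t ω - Et t ω‖^2 ∂μ
          + 2 * ∫ ω, (inner ℝ (Et t ω) (Ghat t ω - Et t ω) : ℝ) ∂μ + ∫ ω, ‖Et t ω‖^2 ∂μ := by
        have hi5 : Integrable (fun ω => 2 * (inner ℝ (Et t ω) (Ghat t ω - Et t ω) : ℝ)) μ :=
          hEGint.const_mul 2
        have hi3 : Integrable (fun ω => ‖Ghat t ω - Et t ω‖^2
            + 2 * (inner ℝ (Et t ω) (Ghat t ω - Et t ω) : ℝ)) μ := hGEint.add hi5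
        rw [hexp, integral_add hi3 hEsqint, integral_add hGEint hi5, integral_const_mul]
      rw [hsum2, hz]
      have := hvt t
      linarith
    -- pointwise bias bound
    have hIgE : Integrable (fun ω => (inner ℝ (gradient H (θ t ω)) (Et t ω) : ℝ)) μ :=
      integrable_inner_of_memL2 (hg2 t) (hE2 t)
    have hIgEneg : Integrable (fun ω => -(inner ℝ (gradient H (θ t ω)) (Et t ω) : ℝ)) μ :=
      hIgE.neg
    have hq : Integrable (fun ω => ‖Et t ω‖^2/4) μ := hEsqint.div_const 4
    have hW1 : Integrable (fun ω => -(inner ℝ (gradient H (θ t ω)) (Et t ω) : ℝ)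
        + ‖Et t ω‖^2/4) μ := hIgEneg.add hq
    have hgd2 : Integrable (fun ω => ‖gradient H (θ t ω)‖^2/2) μ := (hgint t).div_const 2
    have hW2 : Integrable (fun ω => β^2/2 - ‖gradient H (θ t ω)‖^2/2) μ :=
      (integrable_const _).sub hgd2
    have hW : ∫ ω, (-(inner ℝ (gradient H (θ t ω)) (Et t ω) : ℝ) + ‖Et t ω‖^2/4) ∂μ
        ≤ ∫ ω, (β^2/2 - ‖gradient H (θ t ω)‖^2/2) ∂μ := by
      refine integral_mono_ae hW1 hW2 ?_
      filter_upwards [hmean t] with ω h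
      have h9 : Et t ω = gradient H (θ t ω) + b t ω := h
      rw [h9]
      have e1 : ‖gradient H (θ t ω) + b t ω‖^2 = ‖gradient H (θ t ω)‖^2
          + 2 * inner ℝ (gradient H (θ t ω)) (b t ω) + ‖b t ω‖^2 := norm_add_sq_real _ _
      have e2 : (inner ℝ (gradient H (θ t ω)) (gradient H (θ t ω) + b t ω) : ℝ)
          = ‖gradient H (θ t ω)‖^2 + inner ℝ (gradient H (θ t ω)) (b t ω) := by
        rw [inner_add_right, real_inner_self_eq_norm_sq]
      rw [e1, e2]
      have e3 : |(inner ℝ (gradient H (θ t ω)) (b t ω) : ℝ)|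
          ≤ ‖gradient H (θ t ω)‖ * ‖b t ω‖ := abs_real_inner_le_norm _ _
      have e4 := hbias t ω
      have e5 := norm_nonneg (b t ω)
      have e6 := norm_nonneg (gradient H (θ t ω))
      have e7 := abs_le.mp e3
      nlinarith [sq_nonneg (‖gradient H (θ t ω)‖ - ‖b t ω‖)]
    have hWsplit : ∫ ω, (-(inner ℝ (gradient H (θ t ω)) (Et t ω) : ℝ) + ‖Et t ω‖^2/4) ∂μ
        = -(∫ ω, (inner ℝ (gradient H (θ t ω)) (Et t ω) : ℝ) ∂μ)
          + (∫ ω, ‖Et t ω‖^2 ∂μ)/4 := by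
      rw [integral_add hIgEneg hq, integral_neg, integral_div]
    have hWrhs : ∫ ω, (β^2/2 - ‖gradient H (θ t ω)‖^2/2) ∂μ
        = β^2/2 - (∫ ω, ‖gradient H (θ t ω)‖^2 ∂μ)/2 := by
      rw [integral_sub (integrable_const _) hgd2, integral_const, integral_div]
      simp [measure_univ]
    rw [hWsplit, hWrhs] at hW
    have hB0 : 0 ≤ ∫ ω, ‖Et t ω‖^2 ∂μ := integral_nonneg fun ω => by positivity
    have hcoef : 0 ≤ η/4 - L*η^2/2 := by nlinarith
    have k2 : 0 ≤ (η/4 - L*η^2/2) * ∫ ω, ‖Et t ω‖^2 ∂μ := mul_nonneg hcoef hB0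
    have k1 := mul_le_mul_of_nonneg_left hW hη0.le
    have hLη2 : 0 ≤ L*η^2/2 := by positivity
    have k3 := mul_le_mul_of_nonneg_left hGsq hLη2
    rw [hinner_eq] at hsplit
    rw [hsplit] at h1
    nlinarith [k1, k2, k3, h1]
  -- iterate
  have hHint : ∀ t, Integrable (fun ω => H (θ t ω)) μ := by
    intro t
    induction t with
    | zero =>
      have : (fun ω => H (θ 0 ω)) = fun _ω => H θ0 := funext fun ω => by rw [hθ0]
      rw [this]; exact integrable_const _
    | succ n ih => exact (step n ih).1
  set C : ℝ := η/2 * β^2 + L*η^2/2 * v with hC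
  have hsum : η/2 * ∑ t ∈ range T, ∫ ω, ‖gradient H (θ t ω)‖^2 ∂μ
      ≤ (H θ0 - Hstar) + T * C := by
    have h10 : ∀ t, η/2 * ∫ ω, ‖gradient H (θ t ω)‖^2 ∂μ
        ≤ (∫ ω, H (θ t ω) ∂μ - ∫ ω, H (θ (t+1) ω) ∂μ) + C := by
      intro t
      have := (step t (hHint t)).2
      rw [hC]
      linarith
    calc η/2 * ∑ t ∈ range T, ∫ ω, ‖gradient H (θ t ω)‖^2 ∂μ
        = ∑ t ∈ range T, η/2 * ∫ ω, ‖gradient H (θ t ω)‖^2 ∂μ := by rw [mul_sum]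
      _ ≤ ∑ t ∈ range T, ((∫ ω, H (θ t ω) ∂μ - ∫ ω, H (θ (t+1) ω) ∂μ) + C) :=
          sum_le_sum fun t _ => h10 t
      _ = (∫ ω, H (θ 0 ω) ∂μ - ∫ ω, H (θ T ω) ∂μ) + T * C := by
          rw [sum_add_distrib, sum_range_sub', sum_const, card_range, nsmul_eq_mul]
      _ ≤ (H θ0 - Hstar) + T * C := by
          have h0 : ∫ ω, H (θ 0 ω) ∂μ = H θ0 := by
            have : (fun ω => H (θ 0 ω)) = fun _ω => H θ0 := funext fun ω => by rw [hθ0]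
            rw [this, integral_const]
            simp [measure_univ]
          have hT' : Hstar ≤ ∫ ω, H (θ T ω) ∂μ := by
            have := integral_mono (integrable_const Hstar) (hHint T) fun ω => hlow (θ T ω)
            simpa [measure_univ] using this
          linarith
  have hT0 : (0:ℝ) < T := by exact_mod_cast hT
  have hD : 0 ≤ H θ0 - Hstar := sub_nonneg.mpr (hlow θ0)
  set S : ℝ := ∑ t ∈ range T, ∫ ω, ‖gradient H (θ t ω)‖^2 ∂μ with hS
  have hS' : S ≤ 2/η * (H θ0 - Hstar) + T * (β^2 + L*η*v) := by
    have h := mul_le_mul_of_nonneg_left hsum (by positivity : (0:ℝ) ≤ 2/η)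
    calc S = 2/η * (η/2 * S) := by field_simp
      _ ≤ 2/η * ((H θ0 - Hstar) + T * C) := h
      _ = 2/η * (H θ0 - Hstar) + T * (β^2 + L*η*v) := by
          rw [hC]; field_simp
  calc (1/T : ℝ) * S ≤ (1/T : ℝ) * (2/η * (H θ0 - Hstar) + T * (β^2 + L*η*v)) :=
        mul_le_mul_of_nonneg_left hS' (by positivity)
    _ = 2/(η*T) * (H θ0 - Hstar) + (β^2 + L*η*v) := by
        field_simp
    _ ≤ (4/(η*T)) * (H θ0 - Hstar) + 2*β^2 + 2*L*η*v := by
        have e1 : 0 ≤ 2/(η*T) * (H θ0 - Hstar) :=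
          mul_nonneg (by positivity) hD
        have e2 : (4:ℝ)/(η*T) = 2/(η*T) + 2/(η*T) := by ring
        have e3 : 0 ≤ β^2 := sq_nonneg β
        have e4 : 0 ≤ L*η*v := by positivity
        nlinarith
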